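/- Let 0 < c < 1 be a real constant. For all sufficiently large n there exists a graph G with n vertices such that every edge of G is contained in a triangle, e(G) > n²/4 − n^c · n, and bk(G) < n^{1−c/2}/(2√2); that is, γ(n, n^c) < n^{1−c/2}/(2√2). -/

import Mathlib

open Finset
open scoped Classical

/-- The booksize of `G`: the maximum over edges `uv` of `G` of the number of
common neighbors of `u` and `v` (`0` if `G` has no edges). -/
noncomputable def bk {V : Type*} [Fintype V] (G : SimpleGraph V) : ℕ :=
  (Finset.univ.filter fun p : V × V => G.Adj p.1 p.2).sup
    fun p => (G.neighborSet p.1 ∩ G.neighborSet p.2).ncard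

/-- The number of `s`-cliques of `G`. -/
noncomputable def cliqueCount {V : Type*} [Fintype V] (G : SimpleGraph V) (s : ℕ) : ℕ :=
  (G.cliqueFinset s).card

/-- The number of induced subgraphs of `G` isomorphic to `H`. -/
noncomputable def inducedCopies {V W : Type*} [Fintype V] (G : SimpleGraph V)
    (H : SimpleGraph W) : ℕ :=
  {s : Set V | Nonempty (G.induce s ≃g H)}.ncard

/-- `K4j j` is the graph `K₄^(j)`: a triangle on `{0,1,2}` together with the vertex `3`
joined to precisely `3 - j` of its vertices. -/
def K4j (j : ℕ) : SimpleGraph (Fin 4) :=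
  SimpleGraph.fromRel fun a b => (a.val < 3 ∧ b.val < 3) ∨ (a.val = 3 ∧ b.val < 3 - j)

/-- The codegree function `d̂`, as a function on unordered pairs. -/
noncomputable def codegSym {V : Type*} [Fintype V] (G : SimpleGraph V) : Sym2 V → ℕ :=
  Sym2.lift ⟨fun u v => (G.neighborSet u ∩ G.neighborSet v).ncard,
    fun u v => by simp [Set.inter_comm]⟩

/-- `|Γ'(u) ∩ Γ'(v)|`, where `Γ'(x) = V ∖ Γ(x)`, as a function on unordered pairs. -/
noncomputable def noncodegSym {V : Type*} [Fintype V] (G : SimpleGraph V) : Sym2 V → ℕ :=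
  Sym2.lift ⟨fun u v => ((G.neighborSet u)ᶜ ∩ (G.neighborSet v)ᶜ).ncard,
    fun u v => by simp [Set.inter_comm]⟩

set_option maxHeartbeats 1000000

namespace S18

def bs (k p m i : ℕ) : ℕ := i * (m - k) / (p - 1)

def rel (k p m : ℕ) (a b : ℕ) : Prop :=
  (a < m ∧ m ≤ b ∧ b < 2*m) ∨
  (2*m ≤ b ∧ b < 2*m+p^2 ∧ a < m ∧
     bs k p m ((b-2*m)/p) ≤ a ∧ a < bs k p m ((b-2*m)/p) + k) ∨
  (2*m ≤ b ∧ b < 2*m+p^2 ∧ m ≤ a ∧ a < 2*m ∧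
     bs k p m ((b-2*m)%p) ≤ a - m ∧ a - m < bs k p m ((b-2*m)%p) + k)

def gr (n k p m : ℕ) : SimpleGraph (Fin n) :=
  SimpleGraph.fromRel fun a b => rel k p m a.val b.val

lemma gr_adj {n k p m : ℕ} {a b : Fin n} :
    (gr n k p m).Adj a b ↔ a ≠ b ∧ (rel k p m a.val b.val ∨ rel k p m b.val a.val) :=
  SimpleGraph.fromRel_adj _ a b

section params
variable {n k p m : ℕ} (hk : 25 ≤ k) (hkm : k ≤ m) (hp : 2 ≤ p)
  (hn : 2*m + p^2 ≤ n) (hmpk : m ≤ p*k)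
  (hmult : (k+1)*(p-1) + 3*k ≤ 3*m)

lemma bs_mono {i j : ℕ} (h : i ≤ j) : bs k p m i ≤ bs k p m j :=
  Nat.div_le_div_right (Nat.mul_le_mul_right _ h)

include hp in
lemma bs_le (i : ℕ) (hi : i ≤ p - 1) : bs k p m i ≤ m - k :=
  calc bs k p m i ≤ (p-1) * (m-k) / (p-1) :=
        Nat.div_le_div_right (mul_le_mul_left hi _)
    _ = m - k := Nat.mul_div_cancel_left _ (by omega)

lemma bs_zero : bs k p m 0 = 0 := by simp [bs]

include hp hmpk in
lemma bs_succ_le (i : ℕ) : bs k p m (i+1) ≤ bs k p m i + k := by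
  have hd : 0 < p - 1 := by omega
  have h3 : m - k ≤ k * (p-1) := by
    rw [Nat.sub_le_iff_le_add]
    calc m ≤ p * k := hmpk
      _ = k * (p-1) + k := by
        obtain ⟨q, rfl⟩ : ∃ q, p = q+1 := ⟨p-1, by omega⟩
        simp [Nat.mul_succ, Nat.mul_comm]
  have h1 : i * (m-k) < (bs k p m i + 1) * (p-1) :=
    (Nat.div_lt_iff_lt_mul hd).mp (Nat.lt_succ_self _)
  have h2 : (i+1) * (m-k) < (bs k p m i + k + 1) * (p-1) := by
    have e1 : (i+1) * (m-k) = i * (m-k) + (m-k) := by ring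
    have e2 : (bs k p m i + k + 1) * (p-1) = (bs k p m i + 1) * (p-1) + k * (p-1) := by ring
    omega
  have := (Nat.div_lt_iff_lt_mul hd).mpr h2
  unfold bs at *
  omega

include hp hmpk hkm in
lemma bs_cover (t : ℕ) (ht : t < m) : ∃ i ≤ p - 1, bs k p m i ≤ t ∧ t < bs k p m i + k := by
  classical
  set P : ℕ → Prop := fun i => bs k p m i ≤ t with hP
  have hP0 : P 0 := by simp [P, bs_zero]
  set i := Nat.findGreatest P (p-1) with hi
  have hPi : P i := Nat.findGreatest_spec (Nat.zero_le _) hP0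
  have hile : i ≤ p - 1 := Nat.findGreatest_le _
  refine ⟨i, hile, hPi, ?_⟩
  rcases eq_or_lt_of_le hile with heq | hlt
  · have : bs k p m (p-1) = m - k := by
      unfold bs; rw [Nat.mul_div_cancel_left _ (by omega : 0 < p - 1)]
    rw [heq] at *
    omega
  · have hnP : ¬ P (i+1) := Nat.findGreatest_is_greatest (Nat.lt_succ_self _) (by omega)
    have hsucc := bs_succ_le hp hmpk (k := k) (m := m) i
    simp only [P, not_le] at hnP
    omega

include hp hmult hkm in
lemma bs_window {i j t : ℕ} (h1 : bs k p m i ≤ t) (h2 : t < bs k p m i + k)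
    (h3 : bs k p m j ≤ t) (h4 : t < bs k p m j + k) :
    j ≤ i + 2 ∧ i ≤ j + 2 := by
  have hd : 0 < p - 1 := by omega
  have key : ∀ a b : ℕ, a + 3 ≤ b → bs k p m a ≤ t → t < bs k p m a + k →
      bs k p m b ≤ t → False := by
    intro a b hab ha1 ha2 hb1
    have hmono : bs k p m (a+3) ≤ bs k p m b := bs_mono hab
    have hstep : bs k p m a + k ≤ bs k p m (a+3) := by
      have hsum : bs k p m a + (3*(m-k)) / (p-1) ≤ bs k p m (a+3) := by
        unfold bs
        calc a * (m-k) / (p-1) + 3*(m-k) / (p-1) ≤ (a * (m-k) + 3*(m-k)) / (p-1) :=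
              Nat.add_div_le_add_div _ _ _
          _ = (a+3) * (m-k) / (p-1) := by ring_nf
      have hk3 : k ≤ (3*(m-k)) / (p-1) := by
        apply Nat.le_div_iff_mul_le hd |>.mpr
        have hh : (k+1)*(p-1) ≤ 3*(m-k) := by
          have h5 : 3 * (m - k) = 3*m - 3*k := by omega
          omega
        calc k * (p-1) ≤ (k+1)*(p-1) := mul_le_mul_left (by omega) _
          _ ≤ 3*(m-k) := hh
      omega
    omega
  constructor
  · by_contra h
    exact key i j (by omega) h1 h2 h3
  · by_contra h
    exact key j i (by omega) h3 h4 h1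

-- index bounds for z vertices
lemma zi_le {b : ℕ} (hb : b < 2*m + p^2) (hb2 : 2*m ≤ b) (hp0 : 0 < p) :
    (b - 2*m)/p ≤ p - 1 := by
  have h1 : b - 2*m < p^2 := by omega
  have : (b - 2*m)/p < p := by
    apply (Nat.div_lt_iff_lt_mul hp0).mpr
    calc b - 2*m < p^2 := h1
      _ = p * p := sq p
  omega

lemma zj_le {b : ℕ} (hp0 : 0 < p) : (b - 2*m) % p ≤ p - 1 := by
  have := Nat.mod_lt (b - 2*m) hp0
  omega


include hkm hk in
lemma rel_ne {x y : ℕ} (hr : rel k p m x y) : x ≠ y := by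
  have hm : 25 ≤ m := le_trans hk hkm
  rcases hr with ⟨h1, h2, h3⟩ | ⟨h1, h2, h3, h4, h5⟩ | ⟨h1, h2, h3, h4, h5, h6⟩ <;> omega

include hkm hk in
lemma adj_of_rel {a b : Fin n} (hr : rel k p m a.val b.val) : (gr n k p m).Adj a b :=
  gr_adj.mpr ⟨fun hh => rel_ne hk hkm hr (by rw [hh]), Or.inl hr⟩

include hk hkm hp hn hmpk in
lemma tri_rel {a b : Fin n} (hr : rel k p m a.val b.val) :
    ∃ w : Fin n, (gr n k p m).Adj a w ∧ (gr n k p m).Adj b w := by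
  have hm : 25 ≤ m := le_trans hk hkm
  have hp0 : 0 < p := by omega
  rcases hr with ⟨ha, hb1, hb2⟩ | ⟨hb1, hb2, ha, hblk1, hblk2⟩ | ⟨hb1, hb2, ha1, ha2, hblk1, hblk2⟩
  · -- X-Y: take covering z
    obtain ⟨i, hi, hi1, hi2⟩ := bs_cover hkm hp hmpk a.val ha
    obtain ⟨j, hj, hj1, hj2⟩ := bs_cover hkm hp hmpk (b.val - m) (by omega)
    have hsq : p^2 = p*p := sq p
    have hij : j + i*p < p^2 := by
      have h1 : i*p ≤ (p-1)*p := mul_le_mul_left hi _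
      have h2 : (p-1)*p + p = p*p := by
        obtain ⟨q, rfl⟩ : ∃ q, p = q+1 := ⟨p-1, by omega⟩
        simp only [Nat.add_sub_cancel]
        ring
      omega
    have hzlt : 2*m + (j + i*p) < n := by omega
    have e1 : bs k p m ((2*m + (j + i*p) - 2*m)/p) = bs k p m i := by
      congr 1
      rw [show 2*m + (j + i*p) - 2*m = j + i*p by omega,
        Nat.add_mul_div_right _ _ hp0, Nat.div_eq_of_lt (by omega)]
      omega
    have e2 : bs k p m ((2*m + (j + i*p) - 2*m) % p) = bs k p m j := by
      congr 1
      rw [show 2*m + (j + i*p) - 2*m = j + i*p by omega,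
        Nat.add_mul_mod_self_right, Nat.mod_eq_of_lt (by omega)]
    refine ⟨⟨2*m + (j + i*p), hzlt⟩, adj_of_rel hk hkm ?_, adj_of_rel hk hkm ?_⟩
    · show rel k p m a.val (2*m + (j + i*p))
      unfold rel
      omega
    · show rel k p m b.val (2*m + (j + i*p))
      unfold rel
      omega
  · -- X-Z (a is X, b is Z)
    have hjle : (b.val - 2*m) % p ≤ p - 1 := zj_le hp0
    have hble : bs k p m ((b.val-2*m) % p) ≤ m - k := bs_le hp _ hjle
    have hwlt : m + bs k p m ((b.val-2*m) % p) < n := by omega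
    refine ⟨⟨m + bs k p m ((b.val-2*m) % p), hwlt⟩, adj_of_rel hk hkm ?_,
      (adj_of_rel hk hkm ?_).symm⟩
    · show rel k p m a.val (m + bs k p m ((b.val-2*m) % p))
      unfold rel
      omega
    · show rel k p m (m + bs k p m ((b.val-2*m) % p)) b.val
      unfold rel
      omega
  · -- Y-Z (a is Y, b is Z)
    have hile : (b.val - 2*m) / p ≤ p - 1 := zi_le hb2 hb1 hp0
    have hble : bs k p m ((b.val-2*m) / p) ≤ m - k := bs_le hp _ hile
    have hwlt : bs k p m ((b.val-2*m) / p) < n := by omega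
    refine ⟨⟨bs k p m ((b.val-2*m) / p), hwlt⟩, (adj_of_rel hk hkm ?_).symm,
      (adj_of_rel hk hkm ?_).symm⟩
    · show rel k p m (bs k p m ((b.val-2*m) / p)) a.val
      unfold rel
      omega
    · show rel k p m (bs k p m ((b.val-2*m) / p)) b.val
      unfold rel
      omega

include hk hkm hp hn hmpk in
lemma triangles {a b : Fin n} (h : (gr n k p m).Adj a b) :
    ∃ w : Fin n, (gr n k p m).Adj a w ∧ (gr n k p m).Adj b w := by
  rcases (gr_adj.mp h).2 with hr | hr
  · exact tri_rel hk hkm hp hn hmpk hr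
  · obtain ⟨w, h1, h2⟩ := tri_rel hk hkm hp hn hmpk hr
    exact ⟨w, h2, h1⟩

include hk hkm in
lemma common_zmem {u v w : Fin n} (hx : u.val < m) (hz1 : 2*m ≤ v.val) (hz2 : v.val < 2*m + p^2)
    (hw1 : (gr n k p m).Adj u w) (hw2 : (gr n k p m).Adj v w) :
    m ≤ w.val ∧ w.val < 2*m ∧
      bs k p m ((v.val-2*m) % p) ≤ w.val - m ∧ w.val - m < bs k p m ((v.val-2*m) % p) + k := by
  have hm : 25 ≤ m := le_trans hk hkm
  have h1 := (gr_adj.mp hw1).2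
  have h2 := (gr_adj.mp hw2).2
  unfold rel at h1 h2
  -- from h2 : w is X-type (in block of v) or Y-type (in block of v)
  -- from h1 : w is Y-type or Z-type
  omega

include hk hkm in
lemma common_xz {u v : Fin n} (hx : u.val < m) (hz1 : 2*m ≤ v.val) (hz2 : v.val < 2*m + p^2) :
    ((gr n k p m).neighborSet u ∩ (gr n k p m).neighborSet v).ncard ≤ k := by
  classical
  set s0 := bs k p m ((v.val-2*m) % p) with hs0
  set F : Finset (Fin n) := (Finset.Ico s0 (s0+k)).image
    (fun t => if h : m + t < n then (⟨m+t, h⟩ : Fin n) else u) with hF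
  have hsub : ((gr n k p m).neighborSet u ∩ (gr n k p m).neighborSet v) ⊆ ↑F := by
    intro w hw
    have hw1 : (gr n k p m).Adj u w := hw.1
    have hw2 : (gr n k p m).Adj v w := hw.2
    obtain ⟨hy1, hy2, hb1, hb2⟩ := common_zmem hk hkm hx hz1 hz2 hw1 hw2
    simp only [hF, Finset.coe_image, Set.mem_image, Finset.mem_coe, Finset.mem_Ico]
    refine ⟨w.val - m, by omega, ?_⟩
    rw [dif_pos (by omega : m + (w.val - m) < n)]
    exact Fin.ext (by simp; omega)
  calc ((gr n k p m).neighborSet u ∩ (gr n k p m).neighborSet v).ncard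
      ≤ (F : Set (Fin n)).ncard := Set.ncard_le_ncard hsub (Finset.finite_toSet F)
    _ = F.card := Set.ncard_coe_finset F
    _ ≤ (Finset.Ico s0 (s0+k)).card := Finset.card_image_le
    _ = k := by rw [Nat.card_Ico]; omega

include hk hkm in
lemma common_zmem' {u v w : Fin n} (hy1 : m ≤ u.val) (hy2 : u.val < 2*m)
    (hz1 : 2*m ≤ v.val) (hz2 : v.val < 2*m + p^2)
    (hw1 : (gr n k p m).Adj u w) (hw2 : (gr n k p m).Adj v w) :
    w.val < m ∧ bs k p m ((v.val-2*m) / p) ≤ w.val ∧ w.val < bs k p m ((v.val-2*m) / p) + k := by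
  have hm : 25 ≤ m := le_trans hk hkm
  have h1 := (gr_adj.mp hw1).2
  have h2 := (gr_adj.mp hw2).2
  unfold rel at h1 h2
  omega

include hk hkm in
lemma common_yz {u v : Fin n} (hy1 : m ≤ u.val) (hy2 : u.val < 2*m)
    (hz1 : 2*m ≤ v.val) (hz2 : v.val < 2*m + p^2) :
    ((gr n k p m).neighborSet u ∩ (gr n k p m).neighborSet v).ncard ≤ k := by
  classical
  set s0 := bs k p m ((v.val-2*m) / p) with hs0
  set F : Finset (Fin n) := (Finset.Ico s0 (s0+k)).image
    (fun t => if h : t < n then (⟨t, h⟩ : Fin n) else u) with hF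
  have hsub : ((gr n k p m).neighborSet u ∩ (gr n k p m).neighborSet v) ⊆ ↑F := by
    intro w hw
    obtain ⟨hxw, hb1, hb2⟩ := common_zmem' hk hkm hy1 hy2 hz1 hz2 hw.1 hw.2
    simp only [hF, Finset.coe_image, Set.mem_image, Finset.mem_coe, Finset.mem_Ico]
    refine ⟨w.val, by omega, ?_⟩
    rw [dif_pos (w.isLt)]
  calc ((gr n k p m).neighborSet u ∩ (gr n k p m).neighborSet v).ncard
      ≤ (F : Set (Fin n)).ncard := Set.ncard_le_ncard hsub (Finset.finite_toSet F)
    _ = F.card := Set.ncard_coe_finset F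
    _ ≤ (Finset.Ico s0 (s0+k)).card := Finset.card_image_le
    _ = k := by rw [Nat.card_Ico]; omega

include hk hkm in
lemma common_xymem {u v w : Fin n} (hx : u.val < m) (hy1 : m ≤ v.val) (hy2 : v.val < 2*m)
    (hw1 : (gr n k p m).Adj u w) (hw2 : (gr n k p m).Adj v w) :
    2*m ≤ w.val ∧ w.val < 2*m + p^2 ∧
      (bs k p m ((w.val-2*m) / p) ≤ u.val ∧ u.val < bs k p m ((w.val-2*m) / p) + k) ∧
      (bs k p m ((w.val-2*m) % p) ≤ v.val - m ∧ v.val - m < bs k p m ((w.val-2*m) % p) + k) := by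
  have hm : 25 ≤ m := le_trans hk hkm
  have h1 := (gr_adj.mp hw1).2
  have h2 := (gr_adj.mp hw2).2
  unfold rel at h1 h2
  omega

include hk hkm hp hmult in
lemma common_xy {u v : Fin n} (hx : u.val < m) (hy1 : m ≤ v.val) (hy2 : v.val < 2*m) :
    ((gr n k p m).neighborSet u ∩ (gr n k p m).neighborSet v).ncard ≤ 25 := by
  classical
  rcases Set.eq_empty_or_nonempty
      ((gr n k p m).neighborSet u ∩ (gr n k p m).neighborSet v) with he | ⟨w0, hw0⟩
  · rw [he]
    simp
  set i0 := (w0.val - 2*m)/p with hi0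
  set j0 := (w0.val - 2*m) % p with hj0
  obtain ⟨hz01, hz02, hbi0, hbj0⟩ := common_xymem hk hkm hx hy1 hy2 hw0.1 hw0.2
  set F : Finset (Fin n) := ((Finset.Icc (i0-2) (i0+2)) ×ˢ (Finset.Icc (j0-2) (j0+2))).image
    (fun ij => if h : 2*m + (ij.2 + ij.1*p) < n then (⟨2*m + (ij.2 + ij.1*p), h⟩ : Fin n) else u)
    with hF
  have hsub : ((gr n k p m).neighborSet u ∩ (gr n k p m).neighborSet v) ⊆ ↑F := by
    intro w hw
    obtain ⟨hz1, hz2, hbi, hbj⟩ := common_xymem hk hkm hx hy1 hy2 hw.1 hw.2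
    have hwin1 := bs_window hkm hp hmult hbi.1 hbi.2 hbi0.1 hbi0.2
    have hwin2 := bs_window hkm hp hmult hbj.1 hbj.2 hbj0.1 hbj0.2
    simp only [hF, Finset.coe_image, Set.mem_image, Finset.mem_coe, Finset.mem_product,
      Finset.mem_Icc]
    refine ⟨((w.val - 2*m)/p, (w.val - 2*m) % p),
      ⟨⟨Nat.sub_le_iff_le_add.mpr hwin1.1, hwin1.2⟩, ⟨Nat.sub_le_iff_le_add.mpr hwin2.1, hwin2.2⟩⟩, ?_⟩
    have hval : 2*m + ((w.val - 2*m) % p + ((w.val - 2*m)/p)*p) = w.val := by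
      rw [Nat.mod_add_div']
      omega
    rw [dif_pos (by rw [hval]; exact w.isLt)]
    exact Fin.ext (by simp [hval])
  calc ((gr n k p m).neighborSet u ∩ (gr n k p m).neighborSet v).ncard
      ≤ (F : Set (Fin n)).ncard := Set.ncard_le_ncard hsub (Finset.finite_toSet F)
    _ = F.card := Set.ncard_coe_finset F
    _ ≤ ((Finset.Icc (i0-2) (i0+2)) ×ˢ (Finset.Icc (j0-2) (j0+2))).card := Finset.card_image_le
    _ ≤ 25 := by
        rw [Finset.card_product, Nat.card_Icc, Nat.card_Icc]
        have h1 : i0 + 2 + 1 - (i0-2) ≤ 5 := by omega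
        have h2 : j0 + 2 + 1 - (j0-2) ≤ 5 := by omega
        calc (i0 + 2 + 1 - (i0-2)) * (j0 + 2 + 1 - (j0-2)) ≤ 5 * 5 :=
              Nat.mul_le_mul h1 h2
          _ = 25 := by norm_num

include hk hkm hp hmult in
lemma codeg_le {u v : Fin n} (h : (gr n k p m).Adj u v) :
    ((gr n k p m).neighborSet u ∩ (gr n k p m).neighborSet v).ncard ≤ k := by
  have hm : 25 ≤ m := le_trans hk hkm
  have hcomm : (gr n k p m).neighborSet v ∩ (gr n k p m).neighborSet u
      = (gr n k p m).neighborSet u ∩ (gr n k p m).neighborSet v := Set.inter_comm _ _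
  rcases (gr_adj.mp h).2 with hr | hr
  · rcases hr with ⟨h1, h2, h3⟩ | ⟨h1, h2, h3, h4, h5⟩ | ⟨h1, h2, h3, h4, h5, h6⟩
    · exact le_trans (common_xy hk hkm hp hmult h1 h2 h3) hk
    · exact common_xz hk hkm h3 h1 h2
    · exact common_yz hk hkm h3 h4 h1 h2
  · rcases hr with ⟨h1, h2, h3⟩ | ⟨h1, h2, h3, h4, h5⟩ | ⟨h1, h2, h3, h4, h5, h6⟩
    · rw [← hcomm]
      exact le_trans (common_xy hk hkm hp hmult h1 h2 h3) hk
    · rw [← hcomm]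
      exact common_xz hk hkm h3 h1 h2
    · rw [← hcomm]
      exact common_yz hk hkm h3 h4 h1 h2

include hk hkm hp hn hmpk in
lemma edge_lb : m^2 + 2*k*p^2 ≤ (gr n k p m).edgeFinset.card := by
  classical
  have hm25 : 25 ≤ m := hk.trans hkm
  have hp0 : 0 < p := by omega
  have hzile : ∀ z : Fin (p^2), z.val / p ≤ p - 1 := by
    intro z
    have h1 : z.val < p*p := by have := z.isLt; have : p^2 = p*p := sq p; omega
    have := (Nat.div_lt_iff_lt_mul hp0).mpr h1
    omega
  have hzjle : ∀ z : Fin (p^2), z.val % p ≤ p - 1 := by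
    intro z
    have := Nat.mod_lt z.val hp0
    omega
  have hbsi : ∀ z : Fin (p^2), bs k p m (z.val/p) ≤ m - k := fun z => bs_le hp _ (hzile z)
  have hbsj : ∀ z : Fin (p^2), bs k p m (z.val%p) ≤ m - k := fun z => bs_le hp _ (hzjle z)
  set f : (Fin m × Fin m) ⊕ (Fin (p^2) × Fin k × Bool) → Sym2 (Fin n) := fun x =>
    match x with
    | Sum.inl (a, b) => s(⟨a.val, by have := a.isLt; omega⟩, ⟨m + b.val, by have := b.isLt; omega⟩)
    | Sum.inr (z, r, false) => s(⟨bs k p m (z.val/p) + r.val,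
        by have := hbsi z; have := r.isLt; omega⟩, ⟨2*m + z.val, by have := z.isLt; omega⟩)
    | Sum.inr (z, r, true) => s(⟨m + (bs k p m (z.val%p) + r.val),
        by have := hbsj z; have := r.isLt; omega⟩, ⟨2*m + z.val, by have := z.isLt; omega⟩)
    with hf
  have hmaps : ∀ x ∈ (Finset.univ : Finset ((Fin m × Fin m) ⊕ (Fin (p^2) × Fin k × Bool))),
      f x ∈ (gr n k p m).edgeFinset := by
    intro x _
    rw [SimpleGraph.mem_edgeFinset]
    match x with
    | Sum.inl (a, b) =>
      rw [SimpleGraph.mem_edgeSet]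
      apply adj_of_rel hk hkm
      show rel k p m a.val (m + b.val)
      unfold rel
      have := a.isLt
      have := b.isLt
      omega
    | Sum.inr (z, r, false) =>
      rw [SimpleGraph.mem_edgeSet]
      apply adj_of_rel hk hkm
      show rel k p m (bs k p m (z.val/p) + r.val) (2*m + z.val)
      have e1 : bs k p m ((2*m + z.val - 2*m)/p) = bs k p m (z.val/p) := by
        rw [show 2*m + z.val - 2*m = z.val by omega]
      unfold rel
      have := hbsi z
      have := r.isLt
      have := z.isLt
      omega
    | Sum.inr (z, r, true) =>
      rw [SimpleGraph.mem_edgeSet]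
      apply adj_of_rel hk hkm
      show rel k p m (m + (bs k p m (z.val%p) + r.val)) (2*m + z.val)
      have e1 : bs k p m ((2*m + z.val - 2*m) % p) = bs k p m (z.val%p) := by
        rw [show 2*m + z.val - 2*m = z.val by omega]
      unfold rel
      have := hbsj z
      have := r.isLt
      have := z.isLt
      omega
  have hinj : Set.InjOn f (Finset.univ : Finset ((Fin m × Fin m) ⊕ (Fin (p^2) × Fin k × Bool))) := by
    intro x _ y _ heq
    match x, y with
    | Sum.inl (a, b), Sum.inl (a2, b2) =>
      simp only [f, Sym2.eq_iff, Fin.mk.injEq] at heq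
      rcases heq with ⟨h1, h2⟩ | ⟨h1, h2⟩
      · have ha : a = a2 := Fin.ext h1
        have hb : b = b2 := Fin.ext (by omega)
        rw [ha, hb]
      · have := a.isLt
        have := b2.isLt
        omega
    | Sum.inl (a, b), Sum.inr (z, r, s) =>
      exfalso
      have := a.isLt; have := b.isLt; have := r.isLt; have h1 := hbsi z; have h2 := hbsj z
      cases s <;>
        simp only [f, Sym2.eq_iff, Fin.mk.injEq] at heq <;>
        rcases heq with ⟨h3, h4⟩ | ⟨h3, h4⟩ <;> omega
    | Sum.inr (z, r, s), Sum.inl (a, b) =>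
      exfalso
      have := a.isLt; have := b.isLt; have := r.isLt; have h1 := hbsi z; have h2 := hbsj z
      cases s <;>
        simp only [f, Sym2.eq_iff, Fin.mk.injEq] at heq <;>
        rcases heq with ⟨h3, h4⟩ | ⟨h3, h4⟩ <;> omega
    | Sum.inr (z, r, s), Sum.inr (z2, r2, s2) =>
      have := r.isLt; have := r2.isLt
      have h1 := hbsi z; have h2 := hbsj z; have h3 := hbsi z2; have h4 := hbsj z2
      cases s <;> cases s2 <;>
        simp only [f, Sym2.eq_iff, Fin.mk.injEq] at heq <;>
        rcases heq with ⟨h5, h6⟩ | ⟨h5, h6⟩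
      -- false false, first
      · have hz : z = z2 := Fin.ext (by omega)
        subst hz
        have hr : r = r2 := Fin.ext (by omega)
        rw [hr]
      · omega
      -- false true
      · omega
      · omega
      -- true false
      · omega
      · omega
      -- true true
      · have hz : z = z2 := Fin.ext (by omega)
        subst hz
        have hr : r = r2 := Fin.ext (by omega)
        rw [hr]
      · omega
  have hcard := Finset.card_le_card_of_injOn f hmaps hinj
  have hcard2 : (Finset.univ : Finset ((Fin m × Fin m) ⊕ (Fin (p^2) × Fin k × Bool))).card
      = m^2 + 2*k*p^2 := by
    simp [Finset.card_univ]
    ring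
  omega

include hk hkm hp hmult in
lemma bk_le : bk (gr n k p m) ≤ k := by
  apply Finset.sup_le
  intro pr hpr
  have h : (gr n k p m).Adj pr.1 pr.2 := (Finset.mem_filter.mp hpr).2
  exact codeg_le hk hkm hp hmult h

end params

lemma ev_pow (a b C : ℝ) (hab : b < a) : ∀ᶠ n : ℕ in Filter.atTop, C * (n:ℝ)^b ≤ (n:ℝ)^a := by
  have h1 : Filter.Tendsto (fun n : ℕ => (n:ℝ)^(a-b)) Filter.atTop Filter.atTop :=
    (tendsto_rpow_atTop (by linarith)).comp tendsto_natCast_atTop_atTop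
  filter_upwards [h1.eventually_ge_atTop C, Filter.eventually_ge_atTop 1] with n hC h1n
  have hn0 : (0:ℝ) < n := by exact_mod_cast Nat.lt_of_lt_of_le Nat.zero_lt_one h1n
  have he : (n:ℝ)^a = (n:ℝ)^(a-b) * (n:ℝ)^b := by
    rw [← Real.rpow_add hn0]
    ring_nf
  rw [he]
  exact mul_le_mul_of_nonneg_right hC (Real.rpow_nonneg hn0.le b)


lemma polyIneq (k D : ℝ) (hk41 : 41 ≤ k) (hD0 : 0 ≤ D) (hD2k : 2*D ≤ k) (hD16 : 16 ≤ D) :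
    8*(k+1)^2*((1+D)^2*((D^2+2*k*D)/2 - 2*k) + 3*(D^2+2*k*D)/2) ≤ (D^2+2*k*D)^3 := by
  have hk0 : (0:ℝ) < k := by linarith
  have hA1 : 128*k^2*D^3 ≤ 8*k^2*D^4 := by
    nlinarith [mul_nonneg (mul_nonneg (sq_nonneg k) (pow_nonneg hD0 3)) (sub_nonneg.2 hD16)]
  have hB1 : 8*k*D^4 ≤ 4*k^2*D^3 := by
    nlinarith [mul_nonneg (mul_nonneg hk0.le (pow_nonneg hD0 3)) (sub_nonneg.2 hD2k)]
  have hC1 : 24*k*D^3 ≤ k^2*D^3 := by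
    nlinarith [mul_nonneg (mul_nonneg hk0.le (pow_nonneg hD0 3)) (by linarith : (0:ℝ) ≤ k - 24)]
  have hD1 : 4*D^4 ≤ k^2*D^3 := by
    nlinarith [mul_nonneg (mul_nonneg hD0 (pow_nonneg hD0 3)) (sub_nonneg.2 hD2k),
      mul_nonneg (mul_nonneg hk0.le (pow_nonneg hD0 3)) (by linarith : (0:ℝ) ≤ k - 2)]
  have hE1 : 8*D^3 ≤ k^2*D^3 := by
    nlinarith [mul_nonneg (pow_nonneg hD0 3) (by nlinarith : (0:ℝ) ≤ k^2 - 8)]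
  have hF1 : 16*k^2*D^2 + 32*k*D^2 + 16*D^2 ≤ 4*k^2*D^3 := by
    have h64 : 16*k^2*D^2 + 32*k*D^2 + 16*D^2 ≤ 64*k^2*D^2 := by
      nlinarith [mul_nonneg (sq_nonneg D) (by nlinarith : (0:ℝ) ≤ k^2 - k),
        mul_nonneg (sq_nonneg D) (by nlinarith : (0:ℝ) ≤ k^2 - 1)]
    have h65 : 64*k^2*D^2 ≤ 4*k^2*D^3 := by
      nlinarith [mul_nonneg (mul_nonneg (sq_nonneg k) (sq_nonneg D)) (sub_nonneg.2 hD16)]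
    linarith
  nlinarith [hA1, hB1, hC1, hD1, hE1, hF1,
    pow_nonneg hD0 6, mul_nonneg hk0.le (pow_nonneg hD0 5),
    pow_nonneg hk0.le 3, sq_nonneg k, hk0.le]


lemma chain (N k K pp mm : ℝ) (hk41 : 41 ≤ k) (hkK : k ≤ K) (hKk1 : K ≤ k + 1)
    (hNk : N ≤ k^2) (h40 : 40*k ≤ N)
    (hp0 : 0 ≤ pp) (hple : pp ≤ 1 - k + Real.sqrt (N + k^2))
    (hm0 : 0 ≤ mm) (hm1 : N - pp^2 - 1 ≤ 2*mm) (hm2 : 2*mm ≤ N) :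
    N^2/4 - (mm^2 + 2*k*pp^2) ≤ N^3/(8*K^2) - N := by
  have hk0 : (0:ℝ) < k := by linarith
  have hN0 : (0:ℝ) < N := by linarith
  set q := Real.sqrt (N + k^2) with hq
  have hq2 : q^2 = N + k^2 := Real.sq_sqrt (by positivity)
  have hqk : k ≤ q := by
    nlinarith [hq2, Real.sqrt_nonneg (N + k^2)]
  set D := q - k with hD
  have hD0 : (0:ℝ) ≤ D := by simp [hD]; linarith
  have hDN : D^2 + 2*k*D = N := by
    have : q = D + k := by rw [hD]; ring
    nlinarith [hq2]
  have hD2k : 2*D ≤ k := by nlinarith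
  have hD16 : 16 ≤ D := by nlinarith [mul_nonneg hD0 (sub_nonneg.2 hD2k)]
  have hpD : pp ≤ 1 + D := by rw [hD] at *; linarith
  -- bound on the deficiency
  have hA : N/2 - mm ≤ (pp^2+1)/2 := by linarith
  have hB : (0:ℝ) ≤ N/2 + mm := by linarith
  have hBN : N/2 + mm ≤ N := by linarith
  have hbound : N^2/4 - mm^2 ≤ ((pp^2+1)/2)*N :=
    calc N^2/4 - mm^2 = (N/2 - mm)*(N/2+mm) := by ring
      _ ≤ ((pp^2+1)/2)*N := mul_le_mul hA hBN hB (by positivity)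
  have hNhalf : (0:ℝ) ≤ N/2 - 2*k := by linarith
  have hpp2 : pp^2 ≤ (1+D)^2 := by nlinarith
  have step : ((pp^2+1)/2)*N - 2*k*pp^2 + N ≤ (1+D)^2*(N/2 - 2*k) + 3*N/2 := by
    nlinarith [mul_le_mul_of_nonneg_right hpp2 hNhalf]
  have poly : 8*(k+1)^2*((1+D)^2*(N/2 - 2*k) + 3*N/2) ≤ N^3 := by
    have h := polyIneq k D hk41 hD0 hD2k hD16
    rw [hDN] at h
    exact h
  have hbr : (0:ℝ) ≤ (1+D)^2*(N/2 - 2*k) + 3*N/2 := by positivity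
  have hK0 : (0:ℝ) < K := by linarith
  have hK2 : K^2 ≤ (k+1)^2 := pow_le_pow_left₀ (by linarith) hKk1 2
  have poly2 : 8*K^2*((1+D)^2*(N/2 - 2*k) + 3*N/2) ≤ N^3 := by
    have h8 : 8*K^2 ≤ 8*(k+1)^2 := by linarith
    calc 8*K^2*((1+D)^2*(N/2 - 2*k) + 3*N/2)
        ≤ 8*(k+1)^2*((1+D)^2*(N/2 - 2*k) + 3*N/2) := mul_le_mul_of_nonneg_right h8 hbr
      _ ≤ N^3 := poly
  have hdiv : (1+D)^2*(N/2 - 2*k) + 3*N/2 ≤ N^3/(8*K^2) := by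
    rw [le_div_iff₀ (by positivity)]
    linarith [poly2]
  linarith [hbound, step, hdiv]


end S18

theorem stmt18 (c : ℝ) (hc0 : 0 < c) (hc1 : c < 1) :
    ∃ N : ℕ, ∀ n : ℕ, N ≤ n →
      ∃ G : SimpleGraph (Fin n),
        (∀ u v : Fin n, G.Adj u v → ∃ w : Fin n, G.Adj u w ∧ G.Adj v w) ∧
        ((G.edgeFinset.card : ℝ) > (n : ℝ) ^ 2 / 4 - (n : ℝ) ^ c * n) ∧
        ((bk G : ℝ) < (n : ℝ) ^ (1 - c / 2) / (2 * Real.sqrt 2)) := by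
  have hs2 : (0:ℝ) < Real.sqrt 2 := Real.sqrt_pos.mpr (by norm_num)
  have hs2sq : (Real.sqrt 2)^2 = 2 := Real.sq_sqrt (by norm_num)
  set e1 : ℝ := 1 - c/2 with he1
  have he10 : (0:ℝ) < e1 := by rw [he1]; linarith
  have he11 : e1 < 1 := by rw [he1]; linarith
  have hhalf : (1/2 : ℝ) < e1 := by rw [he1]; linarith
  have P1 := S18.ev_pow e1 0 (84*Real.sqrt 2) he10
  have P2 := S18.ev_pow e1 (1/2) (4*Real.sqrt 2) hhalf
  have P3 := S18.ev_pow 1 e1 (40/(2*Real.sqrt 2)) he11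
  have P4 := S18.ev_pow 1 (1/2) 12 (by norm_num)
  have P7 := Filter.eventually_ge_atTop (40:ℕ)
  obtain ⟨N, hN⟩ := Filter.eventually_atTop.mp (P1.and (P2.and (P3.and (P4.and P7))))
  refine ⟨N, fun n hn => ?_⟩
  obtain ⟨p1, p2, p3, p4, p7⟩ := hN n hn
  rw [Real.rpow_zero, mul_one] at p1
  rw [Real.rpow_one] at p3 p4
  have hn40 : (40:ℝ) ≤ n := by exact_mod_cast p7
  have hn0 : (0:ℝ) < n := by linarith
  have hn1 : (1:ℝ) ≤ n := by linarith
  set s : ℝ := (n:ℝ)^(1/2 : ℝ) with hsdef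
  have hs0 : 0 ≤ s := Real.rpow_nonneg hn0.le _
  have hssq : s^2 = n := by
    rw [hsdef, ← Real.rpow_natCast ((n:ℝ)^(1/2:ℝ)) 2, ← Real.rpow_mul hn0.le]
    norm_num
  have hs1 : 1 ≤ s := by nlinarith [hssq, hs0, hn1]
  have hs12 : 12 ≤ s := by nlinarith [p4, hssq, hs0, hs1]
  set K : ℝ := (n:ℝ)^e1/(2*Real.sqrt 2) with hKdef
  have hK42 : 42 ≤ K := by
    rw [hKdef, le_div_iff₀ (by positivity)]
    linarith [p1]
  have hKs : s + 1 ≤ K := by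
    rw [hKdef, le_div_iff₀ (by positivity)]
    have h1 : 2*Real.sqrt 2 ≤ 2*Real.sqrt 2 * s := by
      nlinarith [mul_nonneg hs2.le (sub_nonneg.2 hs1)]
    nlinarith [p2]
  have h40K : 40*K ≤ n := by
    rw [hKdef]
    calc 40*((n:ℝ)^e1/(2*Real.sqrt 2)) = (40/(2*Real.sqrt 2))*(n:ℝ)^e1 := by ring
      _ ≤ n := p3
  -- define k
  set k : ℕ := ⌈K⌉₊ - 1 with hkdef
  have hceil1 : K ≤ (⌈K⌉₊:ℝ) := Nat.le_ceil K
  have hceil2 : (⌈K⌉₊:ℝ) < K + 1 := Nat.ceil_lt_add_one (by positivity)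
  have hc42 : 42 ≤ ⌈K⌉₊ := by exact_mod_cast le_trans (by linarith : (42:ℝ) ≤ K) hceil1
  have hk41 : 41 ≤ k := by omega
  have hkcast : (k:ℝ) = (⌈K⌉₊:ℝ) - 1 := by
    rw [hkdef]
    push_cast [Nat.cast_sub (by omega : 1 ≤ ⌈K⌉₊)]
    ring
  have hkK : (k:ℝ) < K := by rw [hkcast]; linarith
  have hKk1 : K ≤ (k:ℝ) + 1 := by rw [hkcast]; linarith
  have hk41R : (41:ℝ) ≤ k := by exact_mod_cast hk41
  have hk0R : (0:ℝ) < k := by linarith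
  have hks : s ≤ k := by linarith
  have hnk2 : (n:ℝ) ≤ (k:ℝ)^2 := by
    rw [← hssq]
    exact pow_le_pow_left₀ hs0 hks 2
  have h40kR : 40*(k:ℝ) ≤ n := by linarith
  have h40kN : 40*k ≤ n := by exact_mod_cast h40kR
  -- define p
  have hex : ∃ q, n ≤ 2*q*k + q^2 := by
    refine ⟨n, ?_⟩
    have h1 : n ≤ n^2 := Nat.le_self_pow two_ne_zero n
    omega
  set p : ℕ := Nat.find hex with hpdef
  have hfind : n ≤ 2*p*k + p^2 := Nat.find_spec hex
  have hp1 : 1 ≤ p := by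
    rcases Nat.eq_zero_or_pos p with h0 | h
    · rw [h0] at hfind
      simp at hfind
      omega
    · exact h
  have hmin : ¬ (n ≤ 2*(p-1)*k + (p-1)^2) := Nat.find_min hex (by omega)
  have hp2 : 2 ≤ p := by
    rcases Nat.lt_or_ge p 2 with h | h
    · have hp1' : p = 1 := by omega
      rw [hp1'] at hfind
      omega
    · exact h
  have hminR : ((p:ℝ)-1)^2 + 2*((p:ℝ)-1)*(k:ℝ) < n := by
    have h2 : 2*(p-1)*k + (p-1)^2 < n := by omega
    have h3 := (Nat.cast_lt (α := ℝ)).mpr h2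
    push_cast [Nat.cast_sub hp1] at h3
    linarith
  have hp0R : (0:ℝ) ≤ p := by positivity
  have hsqrtb : Real.sqrt ((n:ℝ) + (k:ℝ)^2) ≤ (k:ℝ) + (n:ℝ)/(2*(k:ℝ)) := by
    have hb0 : (0:ℝ) ≤ (k:ℝ) + (n:ℝ)/(2*(k:ℝ)) := by positivity
    rw [show (k:ℝ) + (n:ℝ)/(2*(k:ℝ)) = Real.sqrt (((k:ℝ) + (n:ℝ)/(2*(k:ℝ)))^2) from
      (Real.sqrt_sq hb0).symm]
    apply Real.sqrt_le_sqrt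
    have hak : (n:ℝ)/(2*(k:ℝ))*(2*(k:ℝ)) = n := div_mul_cancel₀ _ (by positivity)
    nlinarith [sq_nonneg ((n:ℝ)/(2*(k:ℝ)))]
  have hpR : (p:ℝ) ≤ 1 - (k:ℝ) + Real.sqrt ((n:ℝ) + (k:ℝ)^2) := by
    have h1 : (p:ℝ) - 1 + (k:ℝ) ≤ Real.sqrt ((n:ℝ) + (k:ℝ)^2) :=
      Real.le_sqrt_of_sq_le (by nlinarith [hminR])
    linarith
  have hpub : (p:ℝ) ≤ 1 + (n:ℝ)/(2*(k:ℝ)) := by linarith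
  have hndiv : (n:ℝ)/(2*(k:ℝ)) ≤ s/2 := by
    rw [div_le_div_iff₀ (by positivity) (by norm_num)]
    nlinarith [mul_le_mul_of_nonneg_left hks hs0, hssq]
  have hpub2 : (p:ℝ) ≤ 1 + s/2 := by linarith
  have hp2n : 2*(p:ℝ)^2 ≤ n := by
    have h1 : (p:ℝ)^2 ≤ (1+s/2)^2 := pow_le_pow_left₀ hp0R hpub2 2
    nlinarith [hssq, hs12, hs0]
  have hp2nN : 2*p^2 ≤ n := by exact_mod_cast hp2n
  -- define m
  set m : ℕ := (n - p^2)/2 with hmdef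
  have hm2N : 2*m ≤ n := by omega
  have hnm : 2*m + p^2 ≤ n := by omega
  have hm1N : n ≤ 2*m + 1 + p^2 := by omega
  have hmpk : m ≤ p*k := by
    have heq : 2*p*k = 2*(p*k) := by ring
    omega
  have hm0R : (0:ℝ) ≤ m := by positivity
  have hm1R : (n:ℝ) - (p:ℝ)^2 - 1 ≤ 2*(m:ℝ) := by
    have := (Nat.cast_le (α := ℝ)).mpr hm1N
    push_cast at this
    linarith
  have hm2R : 2*(m:ℝ) ≤ n := by exact_mod_cast hm2N
  have hkm : k ≤ m := by
    have hK40 : (k:ℝ) < (n:ℝ)/40 := by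
      have : K ≤ (n:ℝ)/40 := by linarith
      linarith
    have hmbig : (n:ℝ)/4 - 1/2 ≤ m := by linarith
    have : (k:ℝ) < m := by linarith
    exact_mod_cast this.le
  have hk25 : 25 ≤ k := by omega
  have hmultN : (k+1)*(p-1) + 3*k ≤ 3*m := by
    have hkp1 : (k:ℝ)*((p:ℝ)-1) ≤ (n:ℝ)/2 := by
      have h1 : (p:ℝ)-1 ≤ (n:ℝ)/(2*(k:ℝ)) := by linarith
      have h2 := mul_le_mul_of_nonneg_left h1 hk0R.le
      have h3 : (k:ℝ)*((n:ℝ)/(2*(k:ℝ))) = (n:ℝ)/2 := by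
        field_simp
      linarith
    have hps : (p:ℝ) - 1 ≤ s := by linarith
    have h3k : 3*(k:ℝ) ≤ (3/40)*n := by linarith
    have h3m : (3/4)*(n:ℝ) - 3/2 ≤ 3*(m:ℝ) := by linarith
    have hsn : s ≤ (n:ℝ)/12 := by linarith
    have hgoal : ((k:ℝ)+1)*((p:ℝ)-1) + 3*(k:ℝ) ≤ 3*(m:ℝ) := by
      have hexp : ((k:ℝ)+1)*((p:ℝ)-1) = (k:ℝ)*((p:ℝ)-1) + ((p:ℝ)-1) := by ring
      linarith [hkp1, hps, h3k, h3m, hsn, hn40]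
    have : (((k+1)*(p-1) + 3*k : ℕ):ℝ) ≤ ((3*m : ℕ):ℝ) := by
      push_cast [Nat.cast_sub hp1]
      linarith
    exact_mod_cast this
  -- the chain inequality
  have hchain := S18.chain (n:ℝ) (k:ℝ) K (p:ℝ) (m:ℝ) hk41R hkK.le hKk1 hnk2 h40kR
    hp0R hpR hm0R hm1R hm2R
  -- budget computation
  have hK2 : K^2 = (n:ℝ)^(2-c)/8 := by
    rw [hKdef, div_pow]
    have h81 : ((n:ℝ)^e1)^2 = (n:ℝ)^(2-c) := by
      rw [← Real.rpow_natCast ((n:ℝ)^e1) 2, ← Real.rpow_mul hn0.le]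
      congr 1
      rw [he1]
      push_cast
      ring
    have h82 : (2*Real.sqrt 2)^2 = 8 := by
      rw [mul_pow, hs2sq]
      norm_num
    rw [h81, h82]
  have hbudget : (n:ℝ)^3/(8*K^2) = (n:ℝ)^c * n := by
    rw [hK2]
    have h91 : (8:ℝ)*((n:ℝ)^(2-c)/8) = (n:ℝ)^(2-c) := by ring
    rw [h91, show ((n:ℝ)^3 : ℝ) = (n:ℝ)^((3:ℕ):ℝ) from (Real.rpow_natCast n 3).symm,
      ← Real.rpow_sub hn0]
    rw [show ((3:ℕ):ℝ) - (2-c) = c + 1 by push_cast; ring, Real.rpow_add hn0, Real.rpow_one]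
  -- conclusion
  refine ⟨S18.gr n k p m, ?_, ?_, ?_⟩
  · intro u v huv
    exact S18.triangles hk25 hkm hp2 hnm hmpk huv
  · have hedge := S18.edge_lb hk25 hkm hp2 hnm hmpk
    have hedgeR : ((m^2 + 2*k*p^2 : ℕ):ℝ) ≤ ((S18.gr n k p m).edgeFinset.card : ℝ) := by
      exact_mod_cast hedge
    have hcast : ((m^2 + 2*k*p^2 : ℕ):ℝ) = (m:ℝ)^2 + 2*(k:ℝ)*(p:ℝ)^2 := by push_cast; ring
    rw [hcast] at hedgeR
    rw [gt_iff_lt]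
    have := hchain
    rw [hbudget] at this
    linarith
  · have hbk := S18.bk_le (n := n) hk25 hkm hp2 hmultN
    have hbkR : ((bk (S18.gr n k p m)):ℝ) ≤ (k:ℝ) := by exact_mod_cast hbk
    calc ((bk (S18.gr n k p m)):ℝ) ≤ (k:ℝ) := hbkR
      _ < K := hkK
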